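/- For ℓ ≥ 2 and t ≥ 1, μ_t(ℓ·K_1) = K_{1,ℓ} + tℓ·K_1, and det(μ_t(ℓ·K_1)) = (t+1)ℓ − 2. -/

import Mathlib

open SimpleGraph

/-- The generalized Mycielskian `μ_t(G)`: vertices are `some (s, i)` for levels
`0 ≤ s ≤ t` (level `0` being the original vertices) plus a root `none`. -/
def Mycielskian {V : Type*} (G : SimpleGraph V) (t : ℕ) :
    SimpleGraph (Option (Fin (t + 1) × V)) where
  Adj x y :=
    match x, y with
    | none, none => False
    | none, some (s, _) => s.val = t
    | some (s, _), none => s.val = t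
    | some (s, i), some (r, j) =>
        G.Adj i j ∧ ((s.val = 0 ∧ r.val = 0) ∨ s.val + 1 = r.val ∨ r.val + 1 = s.val)
  symm := by
    constructor
    rintro (_ | ⟨s, i⟩) (_ | ⟨r, j⟩) h
    · exact h
    · exact h
    · exact h
    · exact ⟨h.1.symm, by tauto⟩
  loopless := by
    constructor
    rintro (_ | ⟨s, i⟩) h
    · exact h
    · exact G.irrefl (v := i) h.1

/-- `S` is a determining set for `G`: the only automorphism fixing `S` pointwise
is the identity. -/
def IsDetermining {V : Type*} (G : SimpleGraph V) (S : Set V) : Prop :=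
  ∀ φ : G ≃g G, (∀ v ∈ S, φ v = v) → ∀ v, φ v = v

/-- The determining number of `G`. -/
noncomputable def detNum {V : Type*} (G : SimpleGraph V) : ℕ :=
  sInf {n | ∃ S : Finset V, S.card = n ∧ IsDetermining G ↑S}

/-- A coloring is distinguishing if no nontrivial automorphism preserves all
color classes. -/
def IsDistinguishing {V : Type*} (G : SimpleGraph V) {C : Type*} (c : V → C) : Prop :=
  ∀ φ : G ≃g G, (∀ v, c (φ v) = c v) → ∀ v, φ v = v

/-- The distinguishing number of `G`. -/
noncomputable def distNum {V : Type*} (G : SimpleGraph V) : ℕ :=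
  sInf {d | ∃ c : V → Fin d, IsDistinguishing G c}

/-- The cost of 2-distinguishing: the minimum size of a color class over all
2-distinguishing colorings. -/
noncomputable def cost2 {V : Type*} (G : SimpleGraph V) [Fintype V] : ℕ :=
  sInf {n | ∃ c : V → Bool, IsDistinguishing G c ∧
    n = (Finset.univ.filter fun v => c v = true).card}

/-- The twin equivalence relation: equal open neighborhoods. -/
def twinSetoid {V : Type*} (G : SimpleGraph V) : Setoid V where
  r x y := G.neighborSet x = G.neighborSet y
  iseqv := ⟨fun _ => rfl, Eq.symm, Eq.trans⟩

/-- The twin quotient graph `G̃`. -/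
def twinQuotient {V : Type*} (G : SimpleGraph V) :
    SimpleGraph (Quotient (twinSetoid G)) where
  Adj a b := ∃ p q : V, Quotient.mk (twinSetoid G) p = a ∧
    Quotient.mk (twinSetoid G) q = b ∧ G.Adj p q
  symm := by constructor; rintro a b ⟨p, q, hp, hq, h⟩; exact ⟨q, p, hq, hp, h.symm⟩
  loopless := by
    constructor
    rintro a ⟨p, q, rfl, hq, h⟩
    have htw : G.neighborSet q = G.neighborSet p := Quotient.exact hq
    have hmem : q ∈ G.neighborSet p := h
    rw [← htw] at hmem
    exact G.irrefl (v := q) hmem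

/-- A twin cover: contains at least one of every pair of distinct twins. -/
def IsTwinCover {V : Type*} (G : SimpleGraph V) (T : Set V) : Prop :=
  ∀ x y : V, x ≠ y → G.neighborSet x = G.neighborSet y → x ∈ T ∨ y ∈ T

/-- A minimum twin cover. -/
def IsMinTwinCover {V : Type*} (G : SimpleGraph V) (T : Set V) : Prop :=
  IsTwinCover G T ∧ ∀ T' : Set V, IsTwinCover G T' → T.ncard ≤ T'.ncard

/-- Attach `ℓ` pendant vertices to the vertex `w` of `G`. -/
def attachPendants {V : Type*} (G : SimpleGraph V) (w : V) (ℓ : ℕ) :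
    SimpleGraph (V ⊕ Fin ℓ) where
  Adj x y :=
    match x, y with
    | Sum.inl a, Sum.inl b => G.Adj a b
    | Sum.inl a, Sum.inr _ => a = w
    | Sum.inr _, Sum.inl b => b = w
    | Sum.inr _, Sum.inr _ => False
  symm := by constructor; rintro (a | a) (b | b) h <;> simp_all <;> exact h.symm
  loopless := by constructor; rintro (a | a) h <;> simp_all

section Helpers

variable {ℓ t : ℕ}

/-- Swapping two vertices with identical adjacency profiles is an automorphism. -/
def swapIso {V : Type*} [DecidableEq V] (G : SimpleGraph V) (a b : V)
    (h : ∀ z, G.Adj a z ↔ G.Adj b z) : G ≃g G where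
  toEquiv := Equiv.swap a b
  map_rel_iff' := by
    intro x y
    have key : ∀ u z, G.Adj (Equiv.swap a b u) z ↔ G.Adj u z := by
      intro u z
      rcases eq_or_ne u a with rfl | hua
      · rw [Equiv.swap_apply_left]; exact (h z).symm
      rcases eq_or_ne u b with rfl | hub
      · rw [Equiv.swap_apply_right]; exact h z
      · rw [Equiv.swap_apply_of_ne_of_ne hua hub]
    show G.Adj (Equiv.swap a b x) (Equiv.swap a b y) ↔ G.Adj x y
    rw [key, G.adj_comm, key, G.adj_comm]

lemma myc_adj_none_some (s : Fin (t+1)) (i : Fin ℓ) :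
    (Mycielskian (⊥ : SimpleGraph (Fin ℓ)) t).Adj none (some (s, i)) ↔ s.val = t := Iff.rfl

lemma myc_adj_some_none (s : Fin (t+1)) (i : Fin ℓ) :
    (Mycielskian (⊥ : SimpleGraph (Fin ℓ)) t).Adj (some (s, i)) none ↔ s.val = t := Iff.rfl

lemma myc_not_adj_some_some (s r : Fin (t+1)) (i j : Fin ℓ) :
    ¬ (Mycielskian (⊥ : SimpleGraph (Fin ℓ)) t).Adj (some (s, i)) (some (r, j)) := fun h => h.1

lemma myc_not_adj_none_none :
    ¬ (Mycielskian (⊥ : SimpleGraph (Fin ℓ)) t).Adj (none : Option (Fin (t+1) × Fin ℓ)) none :=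
  fun h => h

/-- Two `some` vertices with the same top-level status have the same adjacency profile. -/
lemma myc_profile (s r : Fin (t+1)) (i j : Fin ℓ) (h : (s.val = t) ↔ (r.val = t)) :
    ∀ z, (Mycielskian (⊥ : SimpleGraph (Fin ℓ)) t).Adj (some (s, i)) z ↔
      (Mycielskian (⊥ : SimpleGraph (Fin ℓ)) t).Adj (some (r, j)) z := by
  rintro (_ | ⟨u, k⟩)
  · exact h
  · exact iff_of_false (myc_not_adj_some_some _ _ _ _) (myc_not_adj_some_some _ _ _ _)

/-- The leaves of the Mycielskian of the edgeless graph. -/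
noncomputable def mycL (ℓ t : ℕ) : Finset (Option (Fin (t + 1) × Fin ℓ)) :=
  (Finset.univ : Finset (Fin ℓ)).image fun i => some (Fin.last t, i)

/-- The isolated vertices of the Mycielskian of the edgeless graph. -/
noncomputable def mycI (ℓ t : ℕ) : Finset (Option (Fin (t + 1) × Fin ℓ)) :=
  (Finset.univ : Finset (Fin t × Fin ℓ)).image fun p => some (p.1.castSucc, p.2)

lemma mycL_card : (mycL ℓ t).card = ℓ := by
  rw [mycL, Finset.card_image_of_injective _ (fun a b h => by
    simpa using (Option.some_injective _ h))]
  simp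

lemma mycI_card : (mycI ℓ t).card = t * ℓ := by
  rw [mycI, Finset.card_image_of_injective _ ?_]
  · simp [Finset.card_univ]
  · intro a b h
    have h2 := Option.some_injective _ h
    rw [Prod.mk.injEq] at h2
    exact Prod.ext (Fin.castSucc_injective _ h2.1) h2.2

lemma mem_mycL (v : Option (Fin (t + 1) × Fin ℓ)) :
    v ∈ mycL ℓ t ↔ ∃ i, v = some (Fin.last t, i) := by
  simp [mycL, eq_comm]

lemma mem_mycI (v : Option (Fin (t + 1) × Fin ℓ)) :
    v ∈ mycI ℓ t ↔ ∃ s i, s.val < t ∧ v = some (s, i) := by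
  simp only [mycI, Finset.mem_image, Finset.mem_univ, true_and]
  constructor
  · rintro ⟨⟨a, i⟩, rfl⟩
    exact ⟨a.castSucc, i, a.isLt, rfl⟩
  · rintro ⟨s, i, hs, rfl⟩
    exact ⟨(⟨s.val, hs⟩, i), by simp [Fin.castSucc, Fin.ext_iff]⟩

lemma mycL_disj_mycI : Disjoint (mycL ℓ t) (mycI ℓ t) := by
  rw [Finset.disjoint_left]
  intro v hv hv'
  rw [mem_mycL] at hv
  rw [mem_mycI] at hv'
  obtain ⟨i, rfl⟩ := hv
  obtain ⟨s, j, hs, h⟩ := hv'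
  have := (Option.some_injective _ h)
  have : s.val = t := by
    have := congrArg (fun p => (p.1 : Fin (t+1)).val) this
    simpa using this.symm
  omega

/-- Lower bound: any determining set has at least `(t+1)ℓ - 2` vertices. -/
lemma myc_det_lower (hℓ : 2 ≤ ℓ) (ht : 1 ≤ t) (S : Finset (Option (Fin (t + 1) × Fin ℓ)))
    (hS : IsDetermining (Mycielskian (⊥ : SimpleGraph (Fin ℓ)) t) ↑S) :
    (t + 1) * ℓ - 2 ≤ S.card := by
  classical
  set M := Mycielskian (⊥ : SimpleGraph (Fin ℓ)) t
  -- any two vertices with same profile, both outside S, contradict determining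
  have swap_contra : ∀ a b : Option (Fin (t + 1) × Fin ℓ), a ≠ b → a ∉ S → b ∉ S →
      (∀ z, M.Adj a z ↔ M.Adj b z) → False := by
    intro a b hab ha hb hprof
    have := hS (swapIso M a b hprof) ?_ a
    · simp only [swapIso, RelIso.coe_fn_mk, Equiv.swap_apply_left] at this
      exact hab this.symm
    · intro v hv
      simp only [swapIso, RelIso.coe_fn_mk]
      exact Equiv.swap_apply_of_ne_of_ne (fun h => ha (h ▸ hv)) (fun h => hb (h ▸ hv))
  have hLS : (mycL ℓ t \ S).card ≤ 1 := by
    by_contra h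
    obtain ⟨a, ha, b, hb, hab⟩ := Finset.one_lt_card.mp (not_le.mp h)
    rw [Finset.mem_sdiff] at ha hb
    obtain ⟨i, rfl⟩ := (mem_mycL a).mp ha.1
    obtain ⟨j, rfl⟩ := (mem_mycL b).mp hb.1
    exact swap_contra _ _ hab ha.2 hb.2 (myc_profile _ _ _ _ Iff.rfl)
  have hIS : (mycI ℓ t \ S).card ≤ 1 := by
    by_contra h
    obtain ⟨a, ha, b, hb, hab⟩ := Finset.one_lt_card.mp (not_le.mp h)
    rw [Finset.mem_sdiff] at ha hb
    obtain ⟨s, i, hs, rfl⟩ := (mem_mycI a).mp ha.1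
    obtain ⟨r, j, hr, rfl⟩ := (mem_mycI b).mp hb.1
    exact swap_contra _ _ hab ha.2 hb.2
      (myc_profile _ _ _ _ (iff_of_false (by omega) (by omega)))
  have h1 : (mycL ℓ t ∩ S).card + (mycL ℓ t \ S).card = (mycL ℓ t).card :=
    Finset.card_inter_add_card_sdiff _ _
  have h2 : (mycI ℓ t ∩ S).card + (mycI ℓ t \ S).card = (mycI ℓ t).card :=
    Finset.card_inter_add_card_sdiff _ _
  have hdisj : Disjoint (mycL ℓ t ∩ S) (mycI ℓ t ∩ S) :=
    (mycL_disj_mycI).mono (Finset.inter_subset_left) (Finset.inter_subset_left)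
  have hsub : (mycL ℓ t ∩ S) ∪ (mycI ℓ t ∩ S) ⊆ S :=
    Finset.union_subset Finset.inter_subset_right Finset.inter_subset_right
  have hcard : (mycL ℓ t ∩ S).card + (mycI ℓ t ∩ S).card ≤ S.card := by
    rw [← Finset.card_union_of_disjoint hdisj]
    exact Finset.card_le_card hsub
  have hmul : (t + 1) * ℓ = t * ℓ + ℓ := by ring
  have hL := mycL_card (ℓ := ℓ) (t := t)
  have hI := mycI_card (ℓ := ℓ) (t := t)
  have htl : 1 ≤ t * ℓ := Nat.one_le_iff_ne_zero.mpr (Nat.mul_ne_zero (by omega) (by omega))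
  omega

end Helpers
section Helpers2

variable {ℓ t : ℕ}

/-- Upper bound: an explicit determining set. -/
lemma myc_det_upper (hℓ : 2 ≤ ℓ) (ht : 1 ≤ t) :
    ∃ S : Finset (Option (Fin (t + 1) × Fin ℓ)), S.card = (t + 1) * ℓ - 2 ∧
      IsDetermining (Mycielskian (⊥ : SimpleGraph (Fin ℓ)) t) ↑S := by
  classical
  set M := Mycielskian (⊥ : SimpleGraph (Fin ℓ)) t with hM
  set a0 : Option (Fin (t + 1) × Fin ℓ) := some (Fin.last t, ⟨0, by omega⟩) with ha0
  set b0 : Option (Fin (t + 1) × Fin ℓ) := some (⟨0, by omega⟩, ⟨0, by omega⟩) with hb0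
  set S : Finset (Option (Fin (t + 1) × Fin ℓ)) :=
    (mycL ℓ t).erase a0 ∪ (mycI ℓ t).erase b0 with hSdef
  have ha0L : a0 ∈ mycL ℓ t := (mem_mycL a0).mpr ⟨_, rfl⟩
  have hb0I : b0 ∈ mycI ℓ t := (mem_mycI b0).mpr ⟨_, _, by exact Nat.lt_of_lt_of_le Nat.zero_lt_one ht, rfl⟩
  refine ⟨S, ?_, ?_⟩
  · have hdisj : Disjoint ((mycL ℓ t).erase a0) ((mycI ℓ t).erase b0) :=
      mycL_disj_mycI.mono (Finset.erase_subset _ _) (Finset.erase_subset _ _)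
    rw [hSdef, Finset.card_union_of_disjoint hdisj, Finset.card_erase_of_mem ha0L,
      Finset.card_erase_of_mem hb0I, mycL_card, mycI_card]
    have hmul : (t + 1) * ℓ = t * ℓ + ℓ := by ring
    have htl : 1 ≤ t * ℓ := Nat.one_le_iff_ne_zero.mpr (Nat.mul_ne_zero (by omega) (by omega))
    omega
  · intro φ hfix
    have hmemS : ∀ v : Option (Fin (t + 1) × Fin ℓ), v ∈ S ↔
        (v ∈ mycL ℓ t ∧ v ≠ a0) ∨ (v ∈ mycI ℓ t ∧ v ≠ b0) := by
      intro v
      simp [hSdef, Finset.mem_union, Finset.mem_erase, and_comm]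
    have hfix' : ∀ v, v ∈ S → φ v = v := fun v hv => hfix v (by exact_mod_cast hv)
    have hfixleaf : ∀ i : Fin ℓ, i ≠ ⟨0, by omega⟩ → φ (some (Fin.last t, i)) =
        some (Fin.last t, i) := by
      intro i hi
      refine hfix' _ ((hmemS _).mpr (Or.inl ⟨(mem_mycL _).mpr ⟨i, rfl⟩, ?_⟩))
      rw [ha0]
      intro h
      exact hi (Prod.mk.injEq .. ▸ (Option.some_injective _ h)).2
    have hfixiso : ∀ (s : Fin (t+1)) (i : Fin ℓ), s.val < t → some (s, i) ≠ b0 →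
        φ (some (s, i)) = some (s, i) := by
      intro s i hs hne
      exact hfix' _ ((hmemS _).mpr (Or.inr ⟨(mem_mycI _).mpr ⟨s, i, hs, rfl⟩, hne⟩))
    have hone : (⟨1, hℓ⟩ : Fin ℓ) ≠ ⟨0, by omega⟩ :=
      fun h => by simpa using congrArg Fin.val h
    -- φ fixes the root
    have hnone : φ none = none := by
      have hadj : M.Adj none (some (Fin.last t, ⟨1, hℓ⟩)) :=
        (myc_adj_none_some _ _).mpr (Fin.val_last t)
      have h2 : M.Adj (φ none) (φ (some (Fin.last t, ⟨1, hℓ⟩))) := φ.map_adj_iff.mpr hadj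
      rw [hfixleaf _ hone] at h2
      match h3 : φ none with
      | none => rfl
      | some (s, i) =>
          rw [h3] at h2
          exact absurd h2 (myc_not_adj_some_some _ _ _ _)
    -- φ fixes the remaining leaf
    have hA : φ a0 = a0 := by
      have hadj : M.Adj none a0 := (myc_adj_none_some _ _).mpr (Fin.val_last t)
      have h2 : M.Adj (φ none) (φ a0) := φ.map_adj_iff.mpr hadj
      rw [hnone] at h2
      match h3 : φ a0 with
      | none => rw [h3] at h2; exact absurd h2 myc_not_adj_none_none
      | some (s, i) =>
          rw [h3] at h2
          have hs : s = Fin.last t :=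
            Fin.ext (((myc_adj_none_some s i).mp h2).trans (Fin.val_last t).symm)
          subst hs
          rcases eq_or_ne i (⟨0, by omega⟩ : Fin ℓ) with hi | hi
          · rw [hi]
          · exfalso
            have h6 : a0 = some (Fin.last t, i) :=
              φ.injective (h3.trans (hfixleaf i hi).symm)
            rw [ha0] at h6
            exact hi ((Prod.mk.injEq .. ▸ (Option.some_injective _ h6)).2).symm
    -- φ fixes the remaining isolated vertex
    have hB : φ b0 = b0 := by
      have hiso : ∀ z, ¬ M.Adj b0 z := by
        rintro (_ | ⟨u, k⟩) h
        · have h0 : ((⟨0, by omega⟩ : Fin (t+1))).val = t := (myc_adj_some_none _ _).mp h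
          simp only [] at h0
          omega
        · exact myc_not_adj_some_some _ _ _ _ h
      have hiso' : ∀ z, ¬ M.Adj (φ b0) z := by
        intro z h
        rw [← φ.apply_symm_apply z] at h
        exact hiso _ (φ.map_adj_iff.mp h)
      match h3 : φ b0 with
      | none =>
          exfalso
          have h4 := hiso' (some (Fin.last t, ⟨0, by omega⟩))
          rw [h3] at h4
          exact h4 ((myc_adj_none_some _ _).mpr (Fin.val_last t))
      | some (s, i) =>
          have hs : s.val < t := by
            have hna : ¬ M.Adj (some (s, i)) none := by
              rw [← h3]; exact hiso' none
            have hlt := s.isLt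
            rcases Nat.lt_or_ge s.val t with h' | h'
            · exact h'
            · exact absurd ((myc_adj_some_none s i).mpr (by omega)) hna
          rcases eq_or_ne (some (s, i) : Option (Fin (t+1) × Fin ℓ)) b0 with hne | hne
          · exact hne
          · exfalso
            have h6 : b0 = some (s, i) :=
              φ.injective (h3.trans (hfixiso s i hs hne).symm)
            exact hne h6.symm
    -- conclude
    rintro (_ | ⟨s, i⟩)
    · exact hnone
    · rcases Nat.lt_or_ge s.val t with hs | hs
      · rcases eq_or_ne (some (s, i) : Option (Fin (t+1) × Fin ℓ)) b0 with h | h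
        · rw [h]; exact hB
        · exact hfixiso s i hs h
      · have hst : s = Fin.last t := by
          have hlt := s.isLt
          have : s.val = t := by omega
          exact Fin.ext (this.trans (Fin.val_last t).symm)
        subst hst
        rcases eq_or_ne i (⟨0, by omega⟩ : Fin ℓ) with h | h
        · rw [h]; exact hA
        · exact hfixleaf i h

end Helpers2
section Helpers3

/-- The vertex bijection underlying the isomorphism. -/
def mycEquiv (ℓ t : ℕ) : Option (Fin (t + 1) × Fin ℓ) ≃ (Unit ⊕ Fin ℓ) ⊕ Fin (t * ℓ) where
  toFun v := match v with
    | none => Sum.inl (Sum.inl ())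
    | some (s, i) =>
        if h : s.val = t then Sum.inl (Sum.inr i)
        else Sum.inr (finProdFinEquiv (⟨s.val, by have := s.isLt; omega⟩, i))
  invFun w := match w with
    | Sum.inl (Sum.inl _) => none
    | Sum.inl (Sum.inr i) => some (Fin.last t, i)
    | Sum.inr k => some ((finProdFinEquiv.symm k).1.castSucc, (finProdFinEquiv.symm k).2)
  left_inv := by
    rintro (_ | ⟨s, i⟩)
    · rfl
    · by_cases h : s.val = t
      · simp only [dif_pos h]
        have : Fin.last t = s := Fin.ext ((Fin.val_last t).trans h.symm)
        rw [this]
      · simp only [dif_neg h]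
        rw [Equiv.symm_apply_apply]
        have : (⟨s.val, by have := s.isLt; omega⟩ : Fin t).castSucc = s := Fin.ext rfl
        rw [this]
  right_inv := by
    rintro ((u | i) | k)
    · rfl
    · simp only [dif_pos (Fin.val_last t)]
    · have hlt : ((finProdFinEquiv.symm k).1.castSucc : Fin (t + 1)).val ≠ t := by
        have := (finProdFinEquiv.symm k).1.isLt
        simp only [Fin.coe_castSucc]
        omega
      simp only [dif_neg hlt, Fin.coe_castSucc, Fin.eta, Prod.mk.eta,
        Equiv.apply_symm_apply]
      rw [dif_neg (Nat.ne_of_lt (finProdFinEquiv.symm k).1.isLt)]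

/-- The graph isomorphism `μ_t(ℓ·K_1) ≃g K_{1,ℓ} + tℓ·K_1`. -/
def mycIso (ℓ t : ℕ) :
    Mycielskian (⊥ : SimpleGraph (Fin ℓ)) t ≃g
      (completeBipartiteGraph Unit (Fin ℓ) ⊕g (⊥ : SimpleGraph (Fin (t * ℓ)))) where
  toEquiv := mycEquiv ℓ t
  map_rel_iff' := by
    rintro (_ | ⟨s, i⟩) (_ | ⟨r, j⟩) <;>
      simp only [mycEquiv, Equiv.coe_fn_mk] <;>
      [skip; skip; skip; skip]
    · simp [SimpleGraph.sum_adj, Mycielskian]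
    · by_cases h : r.val = t <;>
        simp [dif_pos, dif_neg, h, SimpleGraph.sum_adj, Mycielskian]
    · by_cases h : s.val = t <;>
        simp [dif_pos, dif_neg, h, SimpleGraph.sum_adj, Mycielskian]
    · by_cases h : s.val = t <;> by_cases h' : r.val = t <;>
        simp [dif_pos, dif_neg, h, h', SimpleGraph.sum_adj, Mycielskian]

end Helpers3

/-- `μ_t(ℓ·K_1) = K_{1,ℓ} + tℓ·K_1` and
`det(μ_t(ℓ·K_1)) = (t+1)ℓ − 2`. -/
theorem mycielskian_edgeless (ℓ t : ℕ) (hℓ : 2 ≤ ℓ) (ht : 1 ≤ t) :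
    Nonempty (Mycielskian (⊥ : SimpleGraph (Fin ℓ)) t ≃g
      (completeBipartiteGraph Unit (Fin ℓ) ⊕g (⊥ : SimpleGraph (Fin (t * ℓ))))) ∧
    detNum (Mycielskian (⊥ : SimpleGraph (Fin ℓ)) t) = (t + 1) * ℓ - 2 := by
  refine ⟨⟨mycIso ℓ t⟩, ?_⟩
  obtain ⟨S, hcard, hdet⟩ := myc_det_upper hℓ ht
  unfold detNum
  have hmem : (t + 1) * ℓ - 2 ∈ {n | ∃ S : Finset (Option (Fin (t + 1) × Fin ℓ)),
      S.card = n ∧ IsDetermining (Mycielskian (⊥ : SimpleGraph (Fin ℓ)) t) ↑S} :=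
    ⟨S, hcard, hdet⟩
  apply le_antisymm
  · exact Nat.sInf_le hmem
  · refine le_csInf ⟨_, hmem⟩ ?_
    rintro n ⟨T, rfl, hT⟩
    exact myc_det_lower hℓ ht T hT
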